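/- arXiv:1202.5575 — 3 statements merged into one kernel-verified Lean document; each statement's English description precedes it below -/
import Mathlib

section
/- Existence of the global Whitney–Poisson structure: let Π_{ij} : ℝ^n → ℝ (1 ≤ i, j ≤ n) be smooth with Π_{ij} = −Π_{ji}, and suppose the bracket {f, g} = Σ_{i,j} Π_{ij} · (∂_i f) · (∂_j g) on C^∞(ℝ^n, ℝ) satisfies the Jacobi identity {{f,g},h} + {{h,f},g} + {{g,h},f} = 0 for all smooth f, g, h. Then for every closed X ⊆ ℝ^n the bracket descends to a well-defined ℝ-bilinear bracket on the quotient ring E^∞(X) = C^∞(ℝ^n,ℝ)/J^∞(X) which satisfies the Leibniz rule {F, GH} = {F,G}H + G{F,H} and the Jacobi identity {{F,G},H} + {{H,F},G} + {{G,H},F} = 0 for all F, G, H ∈ E^∞(X). -/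
open scoped ContDiff

noncomputable section

/-- A smooth function `f : ℝ^n → ℝ` is *flat* on `X` if all its iterated
(Fréchet) derivatives vanish at every point of `X`. -/
def IsFlatOn {n : ℕ} (X : Set (Fin n → ℝ)) (f : (Fin n → ℝ) → ℝ) : Prop :=
  ∀ k : ℕ, ∀ x ∈ X, iteratedFDeriv ℝ k f x = 0

/-- The `i`-th partial derivative `∂_i f`. -/
def partialDeriv {n : ℕ} (i : Fin n) (f : (Fin n → ℝ) → ℝ) :
    (Fin n → ℝ) → ℝ :=
  fun x => fderiv ℝ f x (Pi.single i 1)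

/-- The bracket `{f, g} = Σ_{i,j} Π_{ij} · (∂_i f) · (∂_j g)` associated to a matrix
`P = (Π_{ij})` of coefficient functions. -/
def pBracket {n : ℕ} (P : Fin n → Fin n → (Fin n → ℝ) → ℝ)
    (f g : (Fin n → ℝ) → ℝ) : (Fin n → ℝ) → ℝ :=
  fun x => ∑ i : Fin n, ∑ j : Fin n, P i j x * partialDeriv i f x * partialDeriv j g x

/-- The ℝ-algebra `C^∞(ℝ^n, ℝ)` of smooth functions. -/
def smoothAlg (n : ℕ) : Subalgebra ℝ ((Fin n → ℝ) → ℝ) where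
  carrier := {f | ContDiff ℝ ∞ f}
  mul_mem' {f g} hf hg := by
    exact ContDiff.mul (show ContDiff ℝ ∞ f from hf) (show ContDiff ℝ ∞ g from hg)
  add_mem' {f g} hf hg := by
    exact (show ContDiff ℝ ∞ f from hf).add (show ContDiff ℝ ∞ g from hg)
  algebraMap_mem' r := by
    show ContDiff ℝ ∞ (fun _ : Fin n → ℝ => r)
    exact contDiff_const

theorem mem_smoothAlg {n : ℕ} {f : (Fin n → ℝ) → ℝ} (hf : f ∈ smoothAlg n) :
    ContDiff ℝ ∞ f := hf

/-- The ideal `J^∞(X)` of smooth functions flat on `X`. -/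
def flatIdeal (n : ℕ) (X : Set (Fin n → ℝ)) : Ideal (smoothAlg n) where
  carrier := {f | IsFlatOn X (f : (Fin n → ℝ) → ℝ)}
  zero_mem' := by
    intro k x _
    show iteratedFDeriv ℝ k (fun _ => (0 : ℝ)) x = 0
    rw [iteratedFDeriv_zero_fun]; rfl
  add_mem' := by
    intro f g hf hg k x hx
    show iteratedFDeriv ℝ k
      (fun y => (f : (Fin _ → ℝ) → ℝ) y + (g : (Fin _ → ℝ) → ℝ) y) x = 0
    rw [iteratedFDeriv_add_apply' ((mem_smoothAlg f.2).of_le (by exact_mod_cast le_top)).contDiffAt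
      ((mem_smoothAlg g.2).of_le (by exact_mod_cast le_top)).contDiffAt, hf k x hx, hg k x hx, add_zero]
  smul_mem' := by
    intro c f hf k x hx
    show iteratedFDeriv ℝ k
      (fun y => (c : (Fin _ → ℝ) → ℝ) y * (f : (Fin _ → ℝ) → ℝ) y) x = 0
    rw [← norm_le_zero_iff]
    refine le_trans (norm_iteratedFDeriv_mul_le (mem_smoothAlg c.2) (mem_smoothAlg f.2) x
      (by exact_mod_cast le_top)) ?_
    apply le_of_eq
    refine Finset.sum_eq_zero fun i _ => ?_
    rw [hf (k - i) x hx]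
    simp

/-- The algebra `E^∞(X) = C^∞(ℝ^n,ℝ)/J^∞(X)` of Whitney functions on `X`. -/
abbrev Whitney (n : ℕ) (X : Set (Fin n → ℝ)) := smoothAlg n ⧸ flatIdeal n X


section AuxWhitney

open scoped ContDiff

lemma whitney_contDiff_partialDeriv {n : ℕ} (i : Fin n) {f : (Fin n → ℝ) → ℝ}
    (hf : ContDiff ℝ ∞ f) : ContDiff ℝ ∞ (partialDeriv i f) :=
  (hf.fderiv_right (by exact_mod_cast le_top)).clm_apply contDiff_const

lemma whitney_contDiff_pBracket {n : ℕ} (P : Fin n → Fin n → (Fin n → ℝ) → ℝ)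
    (hP : ∀ i j, ContDiff ℝ ∞ (P i j)) {f g : (Fin n → ℝ) → ℝ}
    (hf : ContDiff ℝ ∞ f) (hg : ContDiff ℝ ∞ g) :
    ContDiff ℝ ∞ (pBracket P f g) := by
  unfold pBracket
  exact ContDiff.sum fun i _ => ContDiff.sum fun j _ =>
    ((hP i j).mul (whitney_contDiff_partialDeriv i hf)).mul
      (whitney_contDiff_partialDeriv j hg)

lemma whitney_flat_partialDeriv {n : ℕ} {X : Set (Fin n → ℝ)} (i : Fin n)
    {f : (Fin n → ℝ) → ℝ} (hf : ContDiff ℝ ∞ f) (hflat : IsFlatOn X f) :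
    IsFlatOn X (partialDeriv i f) := by
  intro k x hx
  have h1 : iteratedFDeriv ℝ k (fderiv ℝ f) x = 0 := by
    rw [← norm_eq_zero, norm_iteratedFDeriv_fderiv, hflat (k + 1) x hx, norm_zero]
  have h2 : partialDeriv i f
      = (ContinuousLinearMap.apply ℝ ℝ (Pi.single i 1)) ∘ (fderiv ℝ f) := rfl
  rw [h2, ContinuousLinearMap.iteratedFDeriv_comp_left _
    ((hf.fderiv_right (m := ∞) (by exact_mod_cast le_top)).contDiffAt (x := x)) (by exact_mod_cast le_top), h1]
  ext m
  simp

end AuxWhitney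

set_option synthInstance.maxHeartbeats 500000 in
set_option maxHeartbeats 1000000 in
/-- Existence of the global Whitney–Poisson structure: a smooth antisymmetric bivector
whose bracket satisfies the Jacobi identity induces, for every closed `X ⊆ ℝ^n`, a
well-defined ℝ-bilinear bracket on the quotient ring `E^∞(X)` satisfying the Leibniz
rule and the Jacobi identity. -/
theorem whitney_poisson_descends (n : ℕ) (X : Set (Fin n → ℝ)) (hX : IsClosed X)
    (P : Fin n → Fin n → (Fin n → ℝ) → ℝ)
    (hP : ∀ i j, ContDiff ℝ ∞ (P i j))
    (hPanti : ∀ i j x, P i j x = - P j i x)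
    (hJacobi : ∀ f g h : (Fin n → ℝ) → ℝ, ContDiff ℝ ∞ f → ContDiff ℝ ∞ g →
      ContDiff ℝ ∞ h →
      pBracket P (pBracket P f g) h + pBracket P (pBracket P h f) g
        + pBracket P (pBracket P g h) f = 0) :
    ∃ B : Whitney n X → Whitney n X → Whitney n X,
      -- the bracket descends: `B` is induced by `{-,-}` (well-definedness)
      (∀ (f g : smoothAlg n) (hfg : pBracket P f g ∈ smoothAlg n),
        B (Ideal.Quotient.mk (flatIdeal n X) f) (Ideal.Quotient.mk (flatIdeal n X) g) =
          Ideal.Quotient.mk (flatIdeal n X) ⟨pBracket P f g, hfg⟩) ∧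
      -- ℝ-bilinearity
      (∀ F F' G, B (F + F') G = B F G + B F' G) ∧
      (∀ F G G', B F (G + G') = B F G + B F G') ∧
      (∀ (r : ℝ) (F G : Whitney n X), B (r • F) G = r • B F G) ∧
      (∀ (r : ℝ) (F G : Whitney n X), B F (r • G) = r • B F G) ∧
      -- Leibniz rule
      (∀ F G H, B F (G * H) = B F G * H + G * B F H) ∧
      -- Jacobi identity
      (∀ F G H, B (B F G) H + B (B H F) G + B (B G H) F = 0) := by
    classical
  set I := flatIdeal n X with hI
  have hsm : ∀ f : smoothAlg n, ContDiff ℝ ∞ (f : (Fin n → ℝ) → ℝ) := fun f => mem_smoothAlg f.2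
  have hDA : ∀ (f : smoothAlg n) (x : Fin n → ℝ),
      DifferentiableAt ℝ (f : (Fin n → ℝ) → ℝ) x := fun f x =>
    ((hsm f).differentiable (by simp)).differentiableAt
  have hpbS : ∀ f g : smoothAlg n, pBracket P f g ∈ smoothAlg n := fun f g =>
    whitney_contDiff_pBracket P hP (hsm f) (hsm g)
  set pb : smoothAlg n → smoothAlg n → smoothAlg n :=
    fun f g => ⟨pBracket P f g, hpbS f g⟩ with hpbdef
  -- partial derivative identities
  have pd_add : ∀ (i : Fin n) (f f' : smoothAlg n) (x),
      partialDeriv i (((f + f' : smoothAlg n) : (Fin n → ℝ) → ℝ)) x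
        = partialDeriv i f x + partialDeriv i f' x := by
    intro i f f' x
    have hco : ((f + f' : smoothAlg n) : (Fin n → ℝ) → ℝ)
        = fun y => (f : (Fin n → ℝ) → ℝ) y + (f' : (Fin n → ℝ) → ℝ) y := rfl
    simp [partialDeriv, hco, fderiv_fun_add (hDA f x) (hDA f' x)]
  have pd_sub : ∀ (i : Fin n) (f f' : smoothAlg n) (x),
      partialDeriv i (((f - f' : smoothAlg n) : (Fin n → ℝ) → ℝ)) x
        = partialDeriv i f x - partialDeriv i f' x := by
    intro i f f' x
    have hco : ((f - f' : smoothAlg n) : (Fin n → ℝ) → ℝ)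
        = fun y => (f : (Fin n → ℝ) → ℝ) y - (f' : (Fin n → ℝ) → ℝ) y := rfl
    simp [partialDeriv, hco, fderiv_fun_sub (hDA f x) (hDA f' x)]
  have pd_smul : ∀ (i : Fin n) (r : ℝ) (f : smoothAlg n) (x),
      partialDeriv i (((r • f : smoothAlg n) : (Fin n → ℝ) → ℝ)) x
        = r * partialDeriv i f x := by
    intro i r f x
    have hco : ((r • f : smoothAlg n) : (Fin n → ℝ) → ℝ)
        = fun y => r • (f : (Fin n → ℝ) → ℝ) y := rfl
    simp only [partialDeriv, hco]
    rw [fderiv_fun_const_smul (hDA f x) r]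
    simp
  have pd_mul : ∀ (j : Fin n) (g h : smoothAlg n) (x),
      partialDeriv j (((g * h : smoothAlg n) : (Fin n → ℝ) → ℝ)) x
        = partialDeriv j g x * (h : (Fin n → ℝ) → ℝ) x
          + (g : (Fin n → ℝ) → ℝ) x * partialDeriv j h x := by
    intro j g h x
    have hco : ((g * h : smoothAlg n) : (Fin n → ℝ) → ℝ)
        = fun y => (g : (Fin n → ℝ) → ℝ) y * (h : (Fin n → ℝ) → ℝ) y := rfl
    simp [partialDeriv, hco, fderiv_fun_mul (hDA g x) (hDA h x)]
    ring
  -- membership lemmas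
  have pb_mem_left : ∀ f g : smoothAlg n, f ∈ I → pb f g ∈ I := by
    intro f g hf
    have hrepr : pb f g = ∑ i : Fin n, ∑ j : Fin n,
        (⟨fun x => P i j x * partialDeriv j g x,
          (hP i j).mul (whitney_contDiff_partialDeriv j (hsm g))⟩ : smoothAlg n)
        * ⟨partialDeriv i f, whitney_contDiff_partialDeriv i (hsm f)⟩ := by
      apply Subtype.ext
      funext x
      show pBracket P f g x = _
      rw [AddSubmonoidClass.coe_finset_sum, Finset.sum_apply]
      refine Finset.sum_congr rfl fun i _ => ?_
      rw [AddSubmonoidClass.coe_finset_sum, Finset.sum_apply]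
      refine Finset.sum_congr rfl fun j _ => ?_
      show P i j x * partialDeriv i (f : (Fin n → ℝ) → ℝ) x * partialDeriv j g x = _
      show _ = (P i j x * partialDeriv j (g : (Fin n → ℝ) → ℝ) x)
        * partialDeriv i (f : (Fin n → ℝ) → ℝ) x
      ring
    rw [hrepr]
    refine Ideal.sum_mem I fun i _ => Ideal.sum_mem I fun j _ => I.mul_mem_left _ ?_
    exact whitney_flat_partialDeriv i (hsm f) hf
  have pb_mem_right : ∀ f g : smoothAlg n, g ∈ I → pb f g ∈ I := by
    intro f g hg
    have hrepr : pb f g = ∑ i : Fin n, ∑ j : Fin n,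
        (⟨fun x => P i j x * partialDeriv i f x,
          (hP i j).mul (whitney_contDiff_partialDeriv i (hsm f))⟩ : smoothAlg n)
        * ⟨partialDeriv j g, whitney_contDiff_partialDeriv j (hsm g)⟩ := by
      apply Subtype.ext
      funext x
      show pBracket P f g x = _
      rw [AddSubmonoidClass.coe_finset_sum, Finset.sum_apply]
      refine Finset.sum_congr rfl fun i _ => ?_
      rw [AddSubmonoidClass.coe_finset_sum, Finset.sum_apply]
      refine Finset.sum_congr rfl fun j _ => ?_
      show P i j x * partialDeriv i (f : (Fin n → ℝ) → ℝ) x * partialDeriv j g x = _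
      show _ = (P i j x * partialDeriv i (f : (Fin n → ℝ) → ℝ) x)
        * partialDeriv j (g : (Fin n → ℝ) → ℝ) x
      ring
    rw [hrepr]
    refine Ideal.sum_mem I fun i _ => Ideal.sum_mem I fun j _ => I.mul_mem_left _ ?_
    exact whitney_flat_partialDeriv j (hsm g) hg
  -- algebraic identities for pb
  have pb_add_left : ∀ f f' g : smoothAlg n, pb (f + f') g = pb f g + pb f' g := by
    intro f f' g
    apply Subtype.ext
    funext x
    show pBracket P (((f + f' : smoothAlg n) : (Fin n → ℝ) → ℝ)) g x
      = pBracket P f g x + pBracket P f' g x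
    simp only [pBracket, pd_add, add_mul, mul_add, Finset.sum_add_distrib]
  have pb_add_right : ∀ f g g' : smoothAlg n, pb f (g + g') = pb f g + pb f g' := by
    intro f g g'
    apply Subtype.ext
    funext x
    show pBracket P f (((g + g' : smoothAlg n) : (Fin n → ℝ) → ℝ)) x
      = pBracket P f g x + pBracket P f g' x
    simp only [pBracket, pd_add, add_mul, mul_add, Finset.sum_add_distrib]
  have pb_smul_left : ∀ (r : ℝ) (f g : smoothAlg n), pb (r • f) g = r • pb f g := by
    intro r f g
    apply Subtype.ext
    funext x
    show pBracket P (((r • f : smoothAlg n) : (Fin n → ℝ) → ℝ)) g x = r • pBracket P f g x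
    simp only [pBracket, pd_smul, smul_eq_mul, Finset.mul_sum]
    refine Finset.sum_congr rfl fun i _ => Finset.sum_congr rfl fun j _ => by ring
  have pb_smul_right : ∀ (r : ℝ) (f g : smoothAlg n), pb f (r • g) = r • pb f g := by
    intro r f g
    apply Subtype.ext
    funext x
    show pBracket P f (((r • g : smoothAlg n) : (Fin n → ℝ) → ℝ)) x = r • pBracket P f g x
    simp only [pBracket, pd_smul, smul_eq_mul, Finset.mul_sum]
    refine Finset.sum_congr rfl fun i _ => Finset.sum_congr rfl fun j _ => by ring
  have pb_sub_sub : ∀ f f' g g' : smoothAlg n,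
      pb f g - pb f' g' = pb (f - f') g + pb f' (g - g') := by
    intro f f' g g'
    apply Subtype.ext
    funext x
    show pBracket P f g x - pBracket P f' g' x
      = pBracket P (((f - f' : smoothAlg n) : (Fin n → ℝ) → ℝ)) g x
        + pBracket P f' (((g - g' : smoothAlg n) : (Fin n → ℝ) → ℝ)) x
    simp only [pBracket, pd_sub, sub_mul, mul_sub, Finset.sum_add_distrib,
      Finset.sum_sub_distrib]
    ring
  have pb_leibniz : ∀ f g h : smoothAlg n, pb f (g * h) = pb f g * h + g * pb f h := by
    intro f g h
    apply Subtype.ext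
    funext x
    show pBracket P f (((g * h : smoothAlg n) : (Fin n → ℝ) → ℝ)) x
      = pBracket P f g x * (h : (Fin n → ℝ) → ℝ) x
        + (g : (Fin n → ℝ) → ℝ) x * pBracket P f h x
    simp only [pBracket, pd_mul, Finset.sum_mul, Finset.mul_sum, ← Finset.sum_add_distrib]
    refine Finset.sum_congr rfl fun i _ => Finset.sum_congr rfl fun j _ => by ring
  have pb_jacobi : ∀ f g h : smoothAlg n,
      pb (pb f g) h + pb (pb h f) g + pb (pb g h) f = 0 := by
    intro f g h
    apply Subtype.ext
    funext x
    have := congrFun (hJacobi f g h (hsm f) (hsm g) (hsm h)) x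
    simpa using this
  -- construct the bracket on the quotient
  have compat : ∀ (f g f' g' : smoothAlg n),
      I.quotientRel f f' → I.quotientRel g g' →
      Ideal.Quotient.mk I (pb f g) = Ideal.Quotient.mk I (pb f' g') := by
    intro f g f' g' hff hgg
    rw [Submodule.quotientRel_def] at hff hgg
    rw [Ideal.Quotient.eq, pb_sub_sub]
    exact I.add_mem (pb_mem_left _ _ hff) (pb_mem_right _ _ hgg)
  let Bfun : Whitney n X → Whitney n X → Whitney n X := fun F G =>
    Quotient.liftOn₂' F G (fun f g => Ideal.Quotient.mk I (pb f g))
      (fun f g f' g' hf hg => compat f g f' g' hf hg)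
  have hBmk : ∀ a b : smoothAlg n,
      Bfun (Ideal.Quotient.mk I a) (Ideal.Quotient.mk I b) = Ideal.Quotient.mk I (pb a b) :=
    fun _ _ => rfl
  have hmk : ∀ (r : ℝ) (a : smoothAlg n),
      Ideal.Quotient.mk I (r • a) = r • Ideal.Quotient.mk I a := by
    intro r a
    rw [← Ideal.Quotient.mkₐ_eq_mk ℝ I, map_smul]
  refine ⟨Bfun, ?_, ?_, ?_, ?_, ?_, ?_, ?_⟩
  · intro f g hfg
    exact hBmk f g
  · intro F F' G
    obtain ⟨f, rfl⟩ := Ideal.Quotient.mk_surjective F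
    obtain ⟨f', rfl⟩ := Ideal.Quotient.mk_surjective F'
    obtain ⟨g, rfl⟩ := Ideal.Quotient.mk_surjective G
    rw [← map_add, hBmk, hBmk, hBmk, pb_add_left, map_add]
  · intro F G G'
    obtain ⟨f, rfl⟩ := Ideal.Quotient.mk_surjective F
    obtain ⟨g, rfl⟩ := Ideal.Quotient.mk_surjective G
    obtain ⟨g', rfl⟩ := Ideal.Quotient.mk_surjective G'
    rw [← map_add, hBmk, hBmk, hBmk, pb_add_right, map_add]
  · intro r F G
    obtain ⟨f, rfl⟩ := Ideal.Quotient.mk_surjective F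
    obtain ⟨g, rfl⟩ := Ideal.Quotient.mk_surjective G
    rw [← hmk, hBmk, hBmk, pb_smul_left, hmk]
  · intro r F G
    obtain ⟨f, rfl⟩ := Ideal.Quotient.mk_surjective F
    obtain ⟨g, rfl⟩ := Ideal.Quotient.mk_surjective G
    rw [← hmk, hBmk, hBmk, pb_smul_right, hmk]
  · intro F G H
    obtain ⟨f, rfl⟩ := Ideal.Quotient.mk_surjective F
    obtain ⟨g, rfl⟩ := Ideal.Quotient.mk_surjective G
    obtain ⟨h, rfl⟩ := Ideal.Quotient.mk_surjective H
    rw [← map_mul, hBmk, hBmk, hBmk, pb_leibniz, map_add, map_mul, map_mul]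
  · intro F G H
    obtain ⟨f, rfl⟩ := Ideal.Quotient.mk_surjective F
    obtain ⟨g, rfl⟩ := Ideal.Quotient.mk_surjective G
    obtain ⟨h, rfl⟩ := Ideal.Quotient.mk_surjective H
    rw [hBmk, hBmk, hBmk, hBmk, hBmk, hBmk, ← map_add, ← map_add, pb_jacobi, map_zero]
end
end

section
/- Let X ⊆ ℝ^n be closed and let (c_k)_{k ∈ ℕ} be a sequence of bidifferential operators on ℝ^n with c_0(f,g) = f·g, and define a product ⋆ on the module of formal power series PowerSeries (C^∞(ℝ^n,ℝ)) by (F ⋆ G)_n = Σ_{k+i+j=n} c_k(F_i, G_j); assume ⋆ is associative. Then the set I = { F ∈ PowerSeries (C^∞(ℝ^n,ℝ)) : F_n ∈ J^∞(X) for all n } is a two-sided ideal for ⋆ (an additive subgroup with F ⋆ G ∈ I and G ⋆ F ∈ I whenever F ∈ I and G is arbitrary), and consequently ⋆ induces a well-defined associative product on the quotient PowerSeries(C^∞(ℝ^n,ℝ))/I, which is identified with E^∞(X)[[ħ]] = PowerSeries(C^∞(ℝ^n,ℝ)/J^∞(X)). -/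
open scoped ContDiff

noncomputable section

/-- The iterated partial derivative `∂^α f` associated to a multi-index `α`. -/
def multiPartialDeriv {n : ℕ} (α : Fin n → ℕ) (f : (Fin n → ℝ) → ℝ) :
    (Fin n → ℝ) → ℝ :=
  (List.finRange n).foldr (fun i g => (partialDeriv i)^[α i] g) f

/-- The bidifferential operator `c(f,g) = Σ_{(α,β) ∈ S} a_{αβ} · ∂^α f · ∂^β g`. -/
def biDiffOp {n : ℕ} (S : Finset ((Fin n → ℕ) × (Fin n → ℕ)))
    (a : (Fin n → ℕ) × (Fin n → ℕ) → (Fin n → ℝ) → ℝ)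
    (f g : (Fin n → ℝ) → ℝ) : (Fin n → ℝ) → ℝ :=
  fun x => ∑ p ∈ S, a p x * multiPartialDeriv p.1 f x * multiPartialDeriv p.2 g x

/-- A formal power series with coefficients in `C^∞(ℝ^n,ℝ)` is encoded by its
sequence of coefficients.  Given bidifferential operators `c_k`, the star product
is `(F ⋆ G)_m = Σ_{k+i+j=m} c_k (F_i, G_j)`. -/
def starProd {n : ℕ}
    (c : ℕ → ((Fin n → ℝ) → ℝ) → ((Fin n → ℝ) → ℝ) → ((Fin n → ℝ) → ℝ))
    (F G : ℕ → (Fin n → ℝ) → ℝ) : ℕ → (Fin n → ℝ) → ℝ :=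
  fun m => ∑ p ∈ Finset.HasAntidiagonal.antidiagonal m, ∑ q ∈ Finset.HasAntidiagonal.antidiagonal p.2,
    c p.1 (F q.1) (G q.2)

/-- Membership in `J^∞(X)[[ħ]]`: all coefficients are smooth and flat on `X`. -/
def MemIseq {n : ℕ} (X : Set (Fin n → ℝ)) (F : ℕ → (Fin n → ℝ) → ℝ) : Prop :=
  ∀ m, ContDiff ℝ ∞ (F m) ∧ IsFlatOn X (F m)

section Helpers

variable {n : ℕ} {X : Set (Fin n → ℝ)}

lemma contDiff_partialDeriv {i : Fin n} {f : (Fin n → ℝ) → ℝ} (hf : ContDiff ℝ ∞ f) :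
    ContDiff ℝ ∞ (partialDeriv i f) :=
  ((contDiff_infty_iff_fderiv.mp hf).2).clm_apply contDiff_const

lemma flat_partialDeriv {i : Fin n} {f : (Fin n → ℝ) → ℝ}
    (hf : ContDiff ℝ ∞ f) (hfl : IsFlatOn X f) : IsFlatOn X (partialDeriv i f) := by
  intro k x hx
  have hd : ContDiff ℝ ∞ (fderiv ℝ f) := (contDiff_infty_iff_fderiv.mp hf).2
  have h0 : iteratedFDeriv ℝ k (fderiv ℝ f) x = 0 := by
    rw [← norm_eq_zero, norm_iteratedFDeriv_fderiv, hfl (k + 1) x hx, norm_zero]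
  have heq : partialDeriv i f =
      ⇑(ContinuousLinearMap.apply ℝ ℝ (Pi.single i 1)) ∘ fderiv ℝ f := rfl
  rw [heq, (ContinuousLinearMap.apply ℝ ℝ (Pi.single i 1)).iteratedFDeriv_comp_left (hd.contDiffAt (x := x))
    (by exact_mod_cast le_top), h0]
  ext v
  simp

lemma partialDeriv_add {i : Fin n} {f g : (Fin n → ℝ) → ℝ}
    (hf : ContDiff ℝ ∞ f) (hg : ContDiff ℝ ∞ g) :
    partialDeriv i (f + g) = partialDeriv i f + partialDeriv i g := by
  funext x
  have hfd : DifferentiableAt ℝ f x :=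
    (hf.differentiable (by simp)).differentiableAt
  have hgd : DifferentiableAt ℝ g x :=
    (hg.differentiable (by simp)).differentiableAt
  show fderiv ℝ (fun y => f y + g y) x (Pi.single i 1) = _
  rw [fderiv_fun_add hfd hgd]
  rfl

private lemma foldr_ind {P : ((Fin n → ℝ) → ℝ) → Prop}
    (hP : ∀ (i : Fin n) (g), P g → P (partialDeriv i g)) (l : List (Fin n)) (α : Fin n → ℕ)
    {f : (Fin n → ℝ) → ℝ} (hf : P f) :
    P (l.foldr (fun i g => (partialDeriv i)^[α i] g) f) := by
  induction l with
  | nil => exact hf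
  | cons i l ih =>
    simp only [List.foldr_cons]
    have iter : ∀ (k : ℕ) (g), P g → P ((partialDeriv i)^[k] g) := by
      intro k
      induction k with
      | zero => intro g hg; simpa using hg
      | succ k ihk =>
        intro g hg
        rw [Function.iterate_succ']
        exact hP i _ (ihk g hg)
    exact iter _ _ ih

lemma contDiff_multiPartialDeriv {α : Fin n → ℕ} {f : (Fin n → ℝ) → ℝ}
    (hf : ContDiff ℝ ∞ f) : ContDiff ℝ ∞ (multiPartialDeriv α f) :=
  foldr_ind (fun _ _ hg => contDiff_partialDeriv hg) _ α hf

lemma flat_multiPartialDeriv {α : Fin n → ℕ} {f : (Fin n → ℝ) → ℝ}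
    (hf : ContDiff ℝ ∞ f) (hfl : IsFlatOn X f) : IsFlatOn X (multiPartialDeriv α f) :=
  (foldr_ind (P := fun g => ContDiff ℝ ∞ g ∧ IsFlatOn X g)
    (fun i g hg => ⟨contDiff_partialDeriv hg.1, flat_partialDeriv hg.1 hg.2⟩) _ α ⟨hf, hfl⟩).2

lemma contDiff_iterate_partialDeriv (i : Fin n) :
    ∀ (k : ℕ) (f : (Fin n → ℝ) → ℝ), ContDiff ℝ ∞ f → ContDiff ℝ ∞ ((partialDeriv i)^[k] f) := by
  intro k
  induction k with
  | zero => intro f hf; simpa using hf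
  | succ k ihk =>
    intro f hf
    rw [Function.iterate_succ_apply']
    exact contDiff_partialDeriv (ihk f hf)

lemma iterate_partialDeriv_add (i : Fin n) :
    ∀ (k : ℕ) (u v : (Fin n → ℝ) → ℝ), ContDiff ℝ ∞ u → ContDiff ℝ ∞ v →
      (partialDeriv i)^[k] (u + v) = (partialDeriv i)^[k] u + (partialDeriv i)^[k] v := by
  intro k
  induction k with
  | zero => intro u v _ _; rfl
  | succ k ihk =>
    intro u v hu hv
    rw [Function.iterate_succ_apply', Function.iterate_succ_apply',
      Function.iterate_succ_apply', ihk u v hu hv]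
    exact partialDeriv_add (contDiff_iterate_partialDeriv i k u hu)
      (contDiff_iterate_partialDeriv i k v hv)

private lemma foldr_add (l : List (Fin n)) (α : Fin n → ℕ) :
    ∀ f g : (Fin n → ℝ) → ℝ, ContDiff ℝ ∞ f → ContDiff ℝ ∞ g →
      l.foldr (fun i h => (partialDeriv i)^[α i] h) (f + g)
        = l.foldr (fun i h => (partialDeriv i)^[α i] h) f
          + l.foldr (fun i h => (partialDeriv i)^[α i] h) g := by
  induction l with
  | nil => intro f g _ _; rfl
  | cons i l ih =>
    intro f g hf hg
    simp only [List.foldr_cons]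
    rw [ih f g hf hg]
    exact iterate_partialDeriv_add i (α i) _ _
      (foldr_ind (fun _ _ hh => contDiff_partialDeriv hh) l α hf)
      (foldr_ind (fun _ _ hh => contDiff_partialDeriv hh) l α hg)

lemma multiPartialDeriv_add {α : Fin n → ℕ} {f g : (Fin n → ℝ) → ℝ}
    (hf : ContDiff ℝ ∞ f) (hg : ContDiff ℝ ∞ g) :
    multiPartialDeriv α (f + g) = multiPartialDeriv α f + multiPartialDeriv α g :=
  foldr_add _ α f g hf hg

lemma flat_mul {f g : (Fin n → ℝ) → ℝ} (hf : ContDiff ℝ ∞ f) (hg : ContDiff ℝ ∞ g)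
    (hfl : IsFlatOn X f ∨ IsFlatOn X g) : IsFlatOn X (fun x => f x * g x) := by
  intro k x hx
  rw [← norm_le_zero_iff]
  refine le_trans (norm_iteratedFDeriv_mul_le hf hg x (by exact_mod_cast le_top)) (le_of_eq ?_)
  refine Finset.sum_eq_zero fun i _ => ?_
  rcases hfl with h | h
  · rw [h i x hx]; simp
  · rw [h (k - i) x hx]; simp

lemma flat_sum {ι : Type*} (s : Finset ι) (h : ι → (Fin n → ℝ) → ℝ)
    (hs : ∀ p ∈ s, ContDiff ℝ ∞ (h p)) (hfl : ∀ p ∈ s, IsFlatOn X (h p)) :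
    IsFlatOn X (fun x => ∑ p ∈ s, h p x) := by
  intro k x hx
  rw [iteratedFDeriv_sum (fun j hj => (hs j hj).of_le (by exact_mod_cast le_top))]
  rw [Finset.sum_apply]
  exact Finset.sum_eq_zero fun j hj => hfl j hj k x hx

lemma contDiff_biDiffOp {S : Finset ((Fin n → ℕ) × (Fin n → ℕ))}
    {a : (Fin n → ℕ) × (Fin n → ℕ) → (Fin n → ℝ) → ℝ} (ha : ∀ p, ContDiff ℝ ∞ (a p))
    {f g : (Fin n → ℝ) → ℝ} (hf : ContDiff ℝ ∞ f) (hg : ContDiff ℝ ∞ g) :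
    ContDiff ℝ ∞ (biDiffOp S a f g) :=
  ContDiff.sum fun p _ =>
    (((ha p).mul (contDiff_multiPartialDeriv hf)).mul (contDiff_multiPartialDeriv hg))

lemma flat_biDiffOp {S : Finset ((Fin n → ℕ) × (Fin n → ℕ))}
    {a : (Fin n → ℕ) × (Fin n → ℕ) → (Fin n → ℝ) → ℝ} (ha : ∀ p, ContDiff ℝ ∞ (a p))
    {f g : (Fin n → ℝ) → ℝ} (hf : ContDiff ℝ ∞ f) (hg : ContDiff ℝ ∞ g)
    (hfl : IsFlatOn X f ∨ IsFlatOn X g) : IsFlatOn X (biDiffOp S a f g) := by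
  refine flat_sum S _ (fun p _ =>
    (((ha p).mul (contDiff_multiPartialDeriv hf)).mul (contDiff_multiPartialDeriv hg)))
    (fun p _ => ?_)
  rcases hfl with h | h
  · exact flat_mul ((ha p).mul (contDiff_multiPartialDeriv hf)) (contDiff_multiPartialDeriv hg)
      (Or.inl (flat_mul (ha p) (contDiff_multiPartialDeriv hf)
        (Or.inr (flat_multiPartialDeriv hf h))))
  · exact flat_mul ((ha p).mul (contDiff_multiPartialDeriv hf)) (contDiff_multiPartialDeriv hg)
      (Or.inr (flat_multiPartialDeriv hg h))

lemma biDiffOp_add_left {S : Finset ((Fin n → ℕ) × (Fin n → ℕ))}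
    {a : (Fin n → ℕ) × (Fin n → ℕ) → (Fin n → ℝ) → ℝ}
    {f f' : (Fin n → ℝ) → ℝ} (hf : ContDiff ℝ ∞ f) (hf' : ContDiff ℝ ∞ f')
    (g : (Fin n → ℝ) → ℝ) :
    biDiffOp S a (f + f') g = biDiffOp S a f g + biDiffOp S a f' g := by
  funext x
  show ∑ p ∈ S, a p x * multiPartialDeriv p.1 (f + f') x * multiPartialDeriv p.2 g x
      = (∑ p ∈ S, a p x * multiPartialDeriv p.1 f x * multiPartialDeriv p.2 g x)
        + ∑ p ∈ S, a p x * multiPartialDeriv p.1 f' x * multiPartialDeriv p.2 g x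
  rw [← Finset.sum_add_distrib]
  refine Finset.sum_congr rfl fun p _ => ?_
  rw [multiPartialDeriv_add hf hf', Pi.add_apply]
  ring

lemma biDiffOp_add_right {S : Finset ((Fin n → ℕ) × (Fin n → ℕ))}
    {a : (Fin n → ℕ) × (Fin n → ℕ) → (Fin n → ℝ) → ℝ}
    (f : (Fin n → ℝ) → ℝ) {g g' : (Fin n → ℝ) → ℝ}
    (hg : ContDiff ℝ ∞ g) (hg' : ContDiff ℝ ∞ g') :
    biDiffOp S a f (g + g') = biDiffOp S a f g + biDiffOp S a f g' := by
  funext x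
  show ∑ p ∈ S, a p x * multiPartialDeriv p.1 f x * multiPartialDeriv p.2 (g + g') x
      = (∑ p ∈ S, a p x * multiPartialDeriv p.1 f x * multiPartialDeriv p.2 g x)
        + ∑ p ∈ S, a p x * multiPartialDeriv p.1 f x * multiPartialDeriv p.2 g' x
  rw [← Finset.sum_add_distrib]
  refine Finset.sum_congr rfl fun p _ => ?_
  rw [multiPartialDeriv_add hg hg', Pi.add_apply]
  ring

end Helpers

section StarHelpers

variable {n : ℕ} {X : Set (Fin n → ℝ)}
variable {S : ℕ → Finset ((Fin n → ℕ) × (Fin n → ℕ))}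
  {a : ℕ → (Fin n → ℕ) × (Fin n → ℕ) → (Fin n → ℝ) → ℝ}

lemma flat_add {f g : (Fin n → ℝ) → ℝ} (hf : ContDiff ℝ ∞ f) (hg : ContDiff ℝ ∞ g)
    (h1 : IsFlatOn X f) (h2 : IsFlatOn X g) : IsFlatOn X (f + g) := by
  intro k x hx
  have he : f + g = fun y => f y + g y := rfl
  rw [he, iteratedFDeriv_add_apply' (hf.of_le (by exact_mod_cast le_top)).contDiffAt
    (hg.of_le (by exact_mod_cast le_top)).contDiffAt, h1 k x hx, h2 k x hx, add_zero]

lemma starProd_eq (F G : ℕ → (Fin n → ℝ) → ℝ) (m : ℕ) :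
    starProd (fun k => biDiffOp (S k) (a k)) F G m
      = fun x => ∑ p ∈ Finset.HasAntidiagonal.antidiagonal m, ∑ q ∈ Finset.HasAntidiagonal.antidiagonal p.2,
          biDiffOp (S p.1) (a p.1) (F q.1) (G q.2) x := by
  funext x
  simp [starProd, Finset.sum_apply]

lemma contDiff_starProd (ha : ∀ k p, ContDiff ℝ ∞ (a k p))
    {F G : ℕ → (Fin n → ℝ) → ℝ} (hF : ∀ m, ContDiff ℝ ∞ (F m)) (hG : ∀ m, ContDiff ℝ ∞ (G m))
    (m : ℕ) : ContDiff ℝ ∞ (starProd (fun k => biDiffOp (S k) (a k)) F G m) := by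
  rw [starProd_eq]
  exact ContDiff.sum fun p _ => ContDiff.sum fun q _ =>
    contDiff_biDiffOp (ha p.1) (hF q.1) (hG q.2)

lemma flat_starProd (ha : ∀ k p, ContDiff ℝ ∞ (a k p))
    {F G : ℕ → (Fin n → ℝ) → ℝ} (hF : ∀ m, ContDiff ℝ ∞ (F m)) (hG : ∀ m, ContDiff ℝ ∞ (G m))
    (hfl : (∀ m, IsFlatOn X (F m)) ∨ (∀ m, IsFlatOn X (G m))) (m : ℕ) :
    IsFlatOn X (starProd (fun k => biDiffOp (S k) (a k)) F G m) := by
  rw [starProd_eq]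
  refine flat_sum _ _ (fun p _ => ContDiff.sum fun q _ =>
    contDiff_biDiffOp (ha p.1) (hF q.1) (hG q.2)) (fun p _ => ?_)
  refine flat_sum _ _ (fun q _ => contDiff_biDiffOp (ha p.1) (hF q.1) (hG q.2)) (fun q _ => ?_)
  exact flat_biDiffOp (ha p.1) (hF q.1) (hG q.2) (hfl.imp (fun h => h q.1) (fun h => h q.2))

lemma starProd_add_left {F F' : ℕ → (Fin n → ℝ) → ℝ}
    (hF : ∀ m, ContDiff ℝ ∞ (F m)) (hF' : ∀ m, ContDiff ℝ ∞ (F' m))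
    (G : ℕ → (Fin n → ℝ) → ℝ) :
    starProd (fun k => biDiffOp (S k) (a k)) (F + F') G
      = starProd (fun k => biDiffOp (S k) (a k)) F G
        + starProd (fun k => biDiffOp (S k) (a k)) F' G := by
  funext m
  show (∑ p ∈ Finset.HasAntidiagonal.antidiagonal m, ∑ q ∈ Finset.HasAntidiagonal.antidiagonal p.2,
        biDiffOp (S p.1) (a p.1) ((F + F') q.1) (G q.2))
      = (∑ p ∈ Finset.HasAntidiagonal.antidiagonal m, ∑ q ∈ Finset.HasAntidiagonal.antidiagonal p.2,
        biDiffOp (S p.1) (a p.1) (F q.1) (G q.2))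
        + ∑ p ∈ Finset.HasAntidiagonal.antidiagonal m, ∑ q ∈ Finset.HasAntidiagonal.antidiagonal p.2,
        biDiffOp (S p.1) (a p.1) (F' q.1) (G q.2)
  rw [← Finset.sum_add_distrib]
  refine Finset.sum_congr rfl fun p _ => ?_
  rw [← Finset.sum_add_distrib]
  refine Finset.sum_congr rfl fun q _ => ?_
  have he : (F + F') q.1 = F q.1 + F' q.1 := rfl
  rw [he]
  exact biDiffOp_add_left (hF q.1) (hF' q.1) _

lemma starProd_add_right (F : ℕ → (Fin n → ℝ) → ℝ) {G G' : ℕ → (Fin n → ℝ) → ℝ}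
    (hG : ∀ m, ContDiff ℝ ∞ (G m)) (hG' : ∀ m, ContDiff ℝ ∞ (G' m)) :
    starProd (fun k => biDiffOp (S k) (a k)) F (G + G')
      = starProd (fun k => biDiffOp (S k) (a k)) F G
        + starProd (fun k => biDiffOp (S k) (a k)) F G' := by
  funext m
  show (∑ p ∈ Finset.HasAntidiagonal.antidiagonal m, ∑ q ∈ Finset.HasAntidiagonal.antidiagonal p.2,
        biDiffOp (S p.1) (a p.1) (F q.1) ((G + G') q.2))
      = (∑ p ∈ Finset.HasAntidiagonal.antidiagonal m, ∑ q ∈ Finset.HasAntidiagonal.antidiagonal p.2,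
        biDiffOp (S p.1) (a p.1) (F q.1) (G q.2))
        + ∑ p ∈ Finset.HasAntidiagonal.antidiagonal m, ∑ q ∈ Finset.HasAntidiagonal.antidiagonal p.2,
        biDiffOp (S p.1) (a p.1) (F q.1) (G' q.2)
  rw [← Finset.sum_add_distrib]
  refine Finset.sum_congr rfl fun p _ => ?_
  rw [← Finset.sum_add_distrib]
  refine Finset.sum_congr rfl fun q _ => ?_
  have he : (G + G') q.2 = G q.2 + G' q.2 := rfl
  rw [he]
  exact biDiffOp_add_right _ (hG q.2) (hG' q.2)

end StarHelpers

/-- For a closed `X ⊆ ℝ^n` and a star product `⋆` built from bidifferential operators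
`c_k` with `c_0` the pointwise product, assumed associative, the series with all
coefficients in `J^∞(X)` form a two-sided ideal for `⋆`, and `⋆` induces a
well-defined associative product on the quotient, identified with
`E^∞(X)[[ħ]] = PowerSeries (C^∞(ℝ^n,ℝ)/J^∞(X))` (encoded here as coefficient
sequences `ℕ → E^∞(X)`). -/
theorem star_product_descends_to_whitney (n : ℕ) (X : Set (Fin n → ℝ)) (hX : IsClosed X)
    (S : ℕ → Finset ((Fin n → ℕ) × (Fin n → ℕ)))
    (a : ℕ → (Fin n → ℕ) × (Fin n → ℕ) → (Fin n → ℝ) → ℝ)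
    (ha : ∀ k p, ContDiff ℝ ∞ (a k p))
    (hc0 : ∀ f g : (Fin n → ℝ) → ℝ, biDiffOp (S 0) (a 0) f g = f * g)
    (hassoc : ∀ F G H : ℕ → (Fin n → ℝ) → ℝ,
      (∀ m, ContDiff ℝ ∞ (F m)) → (∀ m, ContDiff ℝ ∞ (G m)) → (∀ m, ContDiff ℝ ∞ (H m)) →
      starProd (fun k => biDiffOp (S k) (a k)) (starProd (fun k => biDiffOp (S k) (a k)) F G) H
        = starProd (fun k => biDiffOp (S k) (a k)) F
            (starProd (fun k => biDiffOp (S k) (a k)) G H)) :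
    -- `I` is an additive subgroup ...
    MemIseq X (0 : ℕ → (Fin n → ℝ) → ℝ) ∧
    (∀ F G, MemIseq X F → MemIseq X G → MemIseq X (F + G)) ∧
    (∀ F, MemIseq X F → MemIseq X (-F)) ∧
    -- ... which absorbs ⋆-multiplication on both sides ...
    (∀ F G : ℕ → (Fin n → ℝ) → ℝ, MemIseq X F → (∀ m, ContDiff ℝ ∞ (G m)) →
      MemIseq X (starProd (fun k => biDiffOp (S k) (a k)) F G) ∧
      MemIseq X (starProd (fun k => biDiffOp (S k) (a k)) G F)) ∧
    -- ... and consequently ⋆ induces a well-defined associative product on the quotient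
    (∃ starW : (ℕ → Whitney n X) → (ℕ → Whitney n X) → (ℕ → Whitney n X),
      (∀ A B C : ℕ → Whitney n X, starW (starW A B) C = starW A (starW B C)) ∧
      (∀ (F G : ℕ → smoothAlg n)
        (h : ∀ m, starProd (fun k => biDiffOp (S k) (a k))
            (fun i => (F i : (Fin n → ℝ) → ℝ)) (fun j => (G j : (Fin n → ℝ) → ℝ)) m
          ∈ smoothAlg n),
        starW (fun m => Ideal.Quotient.mk (flatIdeal n X) (F m))
            (fun m => Ideal.Quotient.mk (flatIdeal n X) (G m))
          = fun m => Ideal.Quotient.mk (flatIdeal n X)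
              ⟨starProd (fun k => biDiffOp (S k) (a k))
                (fun i => (F i : (Fin n → ℝ) → ℝ)) (fun j => (G j : (Fin n → ℝ) → ℝ)) m,
               h m⟩)) := by
  
  classical
  have hzero : MemIseq X (0 : ℕ → (Fin n → ℝ) → ℝ) := by
    intro m
    constructor
    · exact contDiff_const
    · intro k x _
      show iteratedFDeriv ℝ k (fun _ => (0 : ℝ)) x = 0
      rw [iteratedFDeriv_zero_fun]
      rfl
  have hadd : ∀ F G, MemIseq X F → MemIseq X G → MemIseq X (F + G) := by
    intro F G hF hG m
    exact ⟨(hF m).1.add (hG m).1, flat_add (hF m).1 (hG m).1 (hF m).2 (hG m).2⟩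
  have hneg : ∀ F, MemIseq X F → MemIseq X (-F) := by
    intro F hF m
    refine ⟨(hF m).1.neg, ?_⟩
    intro k x hx
    have he : (-F) m = -(F m) := rfl
    rw [he, iteratedFDeriv_neg_apply, (hF m).2 k x hx, neg_zero]
  have habs : ∀ F G : ℕ → (Fin n → ℝ) → ℝ, MemIseq X F → (∀ m, ContDiff ℝ ∞ (G m)) →
      MemIseq X (starProd (fun k => biDiffOp (S k) (a k)) F G) ∧
      MemIseq X (starProd (fun k => biDiffOp (S k) (a k)) G F) := by
    intro F G hF hG
    constructor
    · intro m
      exact ⟨contDiff_starProd ha (fun i => (hF i).1) hG m,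
        flat_starProd ha (fun i => (hF i).1) hG (Or.inl fun i => (hF i).2) m⟩
    · intro m
      exact ⟨contDiff_starProd ha hG (fun i => (hF i).1) m,
        flat_starProd ha hG (fun i => (hF i).1) (Or.inr fun i => (hF i).2) m⟩
  refine ⟨hzero, hadd, hneg, habs, ?_⟩
  -- the quotient product
  have hsurj : Function.Surjective (Ideal.Quotient.mk (flatIdeal n X)) :=
    Ideal.Quotient.mk_surjective
  let s : Whitney n X → smoothAlg n := Function.surjInv hsurj
  have hs : ∀ w, Ideal.Quotient.mk (flatIdeal n X) (s w) = w :=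
    fun w => Function.surjInv_eq hsurj w
  have hsm : ∀ (F G : ℕ → smoothAlg n) (m : ℕ),
      starProd (fun k => biDiffOp (S k) (a k)) (fun i => (F i : (Fin n → ℝ) → ℝ))
        (fun j => (G j : (Fin n → ℝ) → ℝ)) m ∈ smoothAlg n :=
    fun F G m => contDiff_starProd ha (fun i => mem_smoothAlg (F i).2)
      (fun j => mem_smoothAlg (G j).2) m
  -- well-definedness
  have key : ∀ F G F' G' : ℕ → smoothAlg n,
      (∀ m, Ideal.Quotient.mk (flatIdeal n X) (F m) = Ideal.Quotient.mk (flatIdeal n X) (F' m)) →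
      (∀ m, Ideal.Quotient.mk (flatIdeal n X) (G m) = Ideal.Quotient.mk (flatIdeal n X) (G' m)) →
      ∀ m, Ideal.Quotient.mk (flatIdeal n X)
          (⟨starProd (fun k => biDiffOp (S k) (a k)) (fun i => (F i : (Fin n → ℝ) → ℝ))
            (fun j => (G j : (Fin n → ℝ) → ℝ)) m, hsm F G m⟩ : smoothAlg n)
        = Ideal.Quotient.mk (flatIdeal n X)
          (⟨starProd (fun k => biDiffOp (S k) (a k)) (fun i => (F' i : (Fin n → ℝ) → ℝ))
            (fun j => (G' j : (Fin n → ℝ) → ℝ)) m, hsm F' G' m⟩ : smoothAlg n) := by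
    intro F G F' G' hF hG m
    rw [Ideal.Quotient.eq]
    have hFt : ∀ i, ContDiff ℝ ∞ ((F i : (Fin n → ℝ) → ℝ)) := fun i => mem_smoothAlg (F i).2
    have hF't : ∀ i, ContDiff ℝ ∞ ((F' i : (Fin n → ℝ) → ℝ)) := fun i => mem_smoothAlg (F' i).2
    have hGt : ∀ i, ContDiff ℝ ∞ ((G i : (Fin n → ℝ) → ℝ)) := fun i => mem_smoothAlg (G i).2
    have hG't : ∀ i, ContDiff ℝ ∞ ((G' i : (Fin n → ℝ) → ℝ)) := fun i => mem_smoothAlg (G' i).2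
    set Ft : ℕ → (Fin n → ℝ) → ℝ := fun i => (F i : (Fin n → ℝ) → ℝ) with hFtdef
    set F't : ℕ → (Fin n → ℝ) → ℝ := fun i => (F' i : (Fin n → ℝ) → ℝ) with hF'tdef
    set Gt : ℕ → (Fin n → ℝ) → ℝ := fun j => (G j : (Fin n → ℝ) → ℝ) with hGtdef
    set G't : ℕ → (Fin n → ℝ) → ℝ := fun j => (G' j : (Fin n → ℝ) → ℝ) with hG'tdef
    have hDsm : ∀ i, ContDiff ℝ ∞ ((Ft - F't) i) := fun i => (hFt i).sub (hF't i)
    have hEsm : ∀ j, ContDiff ℝ ∞ ((Gt - G't) j) := fun j => (hGt j).sub (hG't j)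
    have hDfl : ∀ i, IsFlatOn X ((Ft - F't) i) := by
      intro i
      have h1 : F i - F' i ∈ flatIdeal n X := Ideal.Quotient.eq.mp (hF i)
      have h2 : IsFlatOn X ((F i - F' i : smoothAlg n) : (Fin n → ℝ) → ℝ) := h1
      have h3 : ((F i - F' i : smoothAlg n) : (Fin n → ℝ) → ℝ) = (Ft - F't) i := rfl
      rwa [h3] at h2
    have hEfl : ∀ j, IsFlatOn X ((Gt - G't) j) := by
      intro j
      have h1 : G j - G' j ∈ flatIdeal n X := Ideal.Quotient.eq.mp (hG j)
      have h2 : IsFlatOn X ((G j - G' j : smoothAlg n) : (Fin n → ℝ) → ℝ) := h1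
      have h3 : ((G j - G' j : smoothAlg n) : (Fin n → ℝ) → ℝ) = (Gt - G't) j := rfl
      rwa [h3] at h2
    have e1 : Ft = F't + (Ft - F't) := by funext i x; simp
    have e2 : Gt = G't + (Gt - G't) := by funext j x; simp
    have h1 : starProd (fun k => biDiffOp (S k) (a k)) Ft Gt
        = starProd (fun k => biDiffOp (S k) (a k)) F't Gt
          + starProd (fun k => biDiffOp (S k) (a k)) (Ft - F't) Gt := by
      conv_lhs => rw [e1]
      exact starProd_add_left hF't hDsm Gt
    have h2 : starProd (fun k => biDiffOp (S k) (a k)) F't Gt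
        = starProd (fun k => biDiffOp (S k) (a k)) F't G't
          + starProd (fun k => biDiffOp (S k) (a k)) F't (Gt - G't) := by
      conv_lhs => rw [e2]
      exact starProd_add_right F't hG't hEsm
    show IsFlatOn X (starProd (fun k => biDiffOp (S k) (a k)) Ft Gt m
      - starProd (fun k => biDiffOp (S k) (a k)) F't G't m)
    have hdiff : starProd (fun k => biDiffOp (S k) (a k)) Ft Gt m
        - starProd (fun k => biDiffOp (S k) (a k)) F't G't m
        = starProd (fun k => biDiffOp (S k) (a k)) (Ft - F't) Gt m
          + starProd (fun k => biDiffOp (S k) (a k)) F't (Gt - G't) m := by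
      rw [h1, h2]
      funext x
      show ((starProd _ F't G't + starProd _ F't (Gt - G't)) m
        + starProd _ (Ft - F't) Gt m) x - (starProd _ F't G't m) x = _
      simp only [Pi.add_apply]
      ring
    rw [hdiff]
    exact flat_add
      (contDiff_starProd ha hDsm hGt m)
      (contDiff_starProd ha hF't hEsm m)
      (flat_starProd ha hDsm hGt (Or.inl hDfl) m)
      (flat_starProd ha hF't hEsm (Or.inr hEfl) m)
  refine ⟨fun A B => fun m => Ideal.Quotient.mk (flatIdeal n X)
      ⟨starProd (fun k => biDiffOp (S k) (a k)) (fun i => ((s (A i) : smoothAlg n) : (Fin n → ℝ) → ℝ))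
        (fun j => ((s (B j) : smoothAlg n) : (Fin n → ℝ) → ℝ)) m,
        hsm (fun i => s (A i)) (fun j => s (B j)) m⟩, ?_, ?_⟩
  · -- associativity
    intro A B C
    funext m
    -- notation
    set FA : ℕ → (Fin n → ℝ) → ℝ := fun i => ((s (A i) : smoothAlg n) : (Fin n → ℝ) → ℝ) with hFA
    set FB : ℕ → (Fin n → ℝ) → ℝ := fun i => ((s (B i) : smoothAlg n) : (Fin n → ℝ) → ℝ) with hFB
    set FC : ℕ → (Fin n → ℝ) → ℝ := fun i => ((s (C i) : smoothAlg n) : (Fin n → ℝ) → ℝ) with hFC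
    have hFAs : ∀ i, ContDiff ℝ ∞ (FA i) := fun i => mem_smoothAlg (s (A i)).2
    have hFBs : ∀ i, ContDiff ℝ ∞ (FB i) := fun i => mem_smoothAlg (s (B i)).2
    have hFCs : ∀ i, ContDiff ℝ ∞ (FC i) := fun i => mem_smoothAlg (s (C i)).2
    set P : ℕ → smoothAlg n := fun i =>
      ⟨starProd (fun k => biDiffOp (S k) (a k)) FA FB i,
        hsm (fun i => s (A i)) (fun j => s (B j)) i⟩ with hP
    set Q : ℕ → smoothAlg n := fun j =>
      ⟨starProd (fun k => biDiffOp (S k) (a k)) FB FC j,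
        hsm (fun i => s (B i)) (fun j => s (C j)) j⟩ with hQ
    have l1 := key (fun i => s (Ideal.Quotient.mk (flatIdeal n X) (P i))) (fun j => s (C j))
      P (fun j => s (C j)) (fun i => hs _) (fun j => rfl) m
    have l2 := key (fun i => s (A i)) (fun j => s (Ideal.Quotient.mk (flatIdeal n X) (Q j)))
      (fun i => s (A i)) Q (fun i => rfl) (fun j => hs _) m
    have hcenter : (⟨starProd (fun k => biDiffOp (S k) (a k)) (fun i => ((P i : (Fin n → ℝ) → ℝ)))
          (fun j => ((s (C j) : smoothAlg n) : (Fin n → ℝ) → ℝ)) m, hsm P (fun j => s (C j)) m⟩ : smoothAlg n)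
        = (⟨starProd (fun k => biDiffOp (S k) (a k)) (fun i => ((s (A i) : smoothAlg n) : (Fin n → ℝ) → ℝ))
          (fun j => ((Q j : (Fin n → ℝ) → ℝ))) m, hsm (fun i => s (A i)) Q m⟩ : smoothAlg n) := by
      apply Subtype.ext
      show starProd (fun k => biDiffOp (S k) (a k))
          (starProd (fun k => biDiffOp (S k) (a k)) FA FB) FC m
        = starProd (fun k => biDiffOp (S k) (a k)) FA
          (starProd (fun k => biDiffOp (S k) (a k)) FB FC) m
      rw [hassoc FA FB FC hFAs hFBs hFCs]
    exact l1.trans ((congrArg (Ideal.Quotient.mk (flatIdeal n X)) hcenter).trans l2.symm)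
  · -- compatibility with representatives
    intro F G h
    funext m
    exact key (fun i => s (Ideal.Quotient.mk (flatIdeal n X) (F i)))
      (fun j => s (Ideal.Quotient.mk (flatIdeal n X) (G j))) F G
      (fun i => hs _) (fun j => hs _) m
end
end

section
/- The Moyal–Weyl product respects the Fedosov filtration: for a nonzero element a of A = MvPolynomial (Fin m ⊕ Fin m) (Polynomial ℂ), define its Fedosov degree deg_F(a) as the minimum over all monomials occurring in a of (total degree in the variables q_i, p_i) + 2·(lowest ħ-degree of the corresponding coefficient in ℂ[ħ]). Then for the Moyal–Weyl product ∘, deg_F(a ∘ b) ≥ deg_F(a) + deg_F(b) whenever a ∘ b ≠ 0; equivalently, with F^s = span of monomials of Fedosov degree ≥ s, one has F^s ∘ F^t ⊆ F^{s+t}. -/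
open TensorProduct

noncomputable section

/-- The phase-space polynomial algebra `A = ℂ[ħ][q_1,…,q_m,p_1,…,p_m]`:
multivariate polynomials in the `2m` variables indexed by `Fin m ⊕ Fin m`
(where `Sum.inl i` indexes `q_i` and `Sum.inr i` indexes `p_i`) with
coefficients in `ℂ[ħ] = Polynomial ℂ`. -/
abbrev PhaseAlg (m : ℕ) := MvPolynomial (Fin m ⊕ Fin m) (Polynomial ℂ)

/-- Instance search no longer finds this in current Mathlib; it is the same instance
`LinearMap.addCommGroup` built on `TensorProduct.addCommGroup`. -/
instance phaseAlgTensorEndAddCommGroup (m : ℕ) :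
    AddCommGroup (PhaseAlg m ⊗[Polynomial ℂ] PhaseAlg m →ₗ[Polynomial ℂ]
      PhaseAlg m ⊗[Polynomial ℂ] PhaseAlg m) :=
  @LinearMap.addCommGroup _ _ _ _ _ _ _
    (@TensorProduct.addCommGroup (Polynomial ℂ) _ (PhaseAlg m) (PhaseAlg m) _ _ _ _) _ _ _

/-- The Poisson bivector operator
`Π̂ = Σ_i (∂_{q_i} ⊗ ∂_{p_i} − ∂_{p_i} ⊗ ∂_{q_i})` on `A ⊗ A`. -/
def PiHat (m : ℕ) :
    PhaseAlg m ⊗[Polynomial ℂ] PhaseAlg m →ₗ[Polynomial ℂ]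
      PhaseAlg m ⊗[Polynomial ℂ] PhaseAlg m :=
  ∑ i : Fin m,
    ((TensorProduct.map (MvPolynomial.pderiv (Sum.inl i)).toLinearMap
        (MvPolynomial.pderiv (Sum.inr i)).toLinearMap :
        PhaseAlg m ⊗[Polynomial ℂ] PhaseAlg m →ₗ[Polynomial ℂ]
          PhaseAlg m ⊗[Polynomial ℂ] PhaseAlg m)
      - (TensorProduct.map (MvPolynomial.pderiv (Sum.inr i)).toLinearMap
        (MvPolynomial.pderiv (Sum.inl i)).toLinearMap :
        PhaseAlg m ⊗[Polynomial ℂ] PhaseAlg m →ₗ[Polynomial ℂ]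
          PhaseAlg m ⊗[Polynomial ℂ] PhaseAlg m))

/-- The Moyal--Weyl star product
`a ∘ b = Σ_{k ≥ 0} ((−iħ)^k / k!) · μ(Π̂^k(a ⊗ b))`; the sum is finite since
`Π̂^k (a ⊗ b) = 0` as soon as `k` exceeds the total degrees of `a` and `b`, so it
may be truncated at `k = totalDegree a + totalDegree b`. -/
def moyal {m : ℕ} (a b : PhaseAlg m) : PhaseAlg m :=
  ∑ k ∈ Finset.range (a.totalDegree + b.totalDegree + 1),
    ((k.factorial : ℂ)⁻¹ * (-Complex.I) ^ k) •
      (MvPolynomial.C (Polynomial.X ^ k) *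
        LinearMap.mul' (Polynomial ℂ) (PhaseAlg m) ((PiHat m ^ k) (a ⊗ₜ[Polynomial ℂ] b)))


/-- `a` lies in the Fedosov filtration step `F^s`: every monomial `q^d p^e ħ^j`
occurring in `a` satisfies `|d| + 2j ≥ s`, where `|d|` is the total degree in the
variables `q_i, p_i` and `j` is the `ħ`-degree. -/
lemma coeff_pderiv {m : ℕ} (v : Fin m ⊕ Fin m) (p : PhaseAlg m)
    (d : (Fin m ⊕ Fin m) →₀ ℕ) :
    MvPolynomial.coeff d (MvPolynomial.pderiv v p) =
      ((d v + 1 : ℕ) : Polynomial ℂ) * MvPolynomial.coeff (d + Finsupp.single v 1) p := by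
  induction p using MvPolynomial.induction_on' with
  | monomial s a =>
    rw [MvPolynomial.pderiv_monomial, MvPolynomial.coeff_monomial, MvPolynomial.coeff_monomial]
    by_cases h : s = d + Finsupp.single v 1
    · subst h
      have h1 : ((d + Finsupp.single v 1) - Finsupp.single v 1) = d := by
        ext x; simp [Finsupp.tsub_apply]
      rw [if_pos h1, if_pos rfl, Finsupp.add_apply, Finsupp.single_eq_same]
      push_cast
      ring
    · rw [if_neg h]
      by_cases hs : s v = 0
      · simp [hs]
      · have hne : ¬ ((s - Finsupp.single v 1) = d) := by
          intro he
          apply h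
          ext x
          have hx := DFunLike.congr_fun he x
          rw [Finsupp.tsub_apply] at hx
          rw [Finsupp.add_apply]
          by_cases hxv : x = v
          · subst hxv
            rw [Finsupp.single_eq_same] at hx ⊢
            omega
          · rw [Finsupp.single_eq_of_ne' (fun h' => hxv h'.symm)] at hx ⊢
            omega
        rw [if_neg hne, mul_zero]
  | add p q hp hq =>
    simp only [map_add, MvPolynomial.coeff_add, hp, hq, mul_add]

def FedosovGE {m : ℕ} (s : ℕ) (a : PhaseAlg m) : Prop :=
  ∀ (d : (Fin m ⊕ Fin m) →₀ ℕ) (j : ℕ),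
    (MvPolynomial.coeff d a).coeff j ≠ 0 → s ≤ d.sum (fun _ e => e) + 2 * j

/-- The Fedosov filtration step `F^s` as a `ℂ[ħ]`-submodule. -/
def fedSub (m s : ℕ) : Submodule (Polynomial ℂ) (PhaseAlg m) where
  carrier := {a | FedosovGE s a}
  add_mem' := by
    intro a b ha hb d j h
    rw [MvPolynomial.coeff_add, Polynomial.coeff_add] at h
    rcases (by by_contra hc; push_neg at hc; simp [hc.1, hc.2] at h :
        (MvPolynomial.coeff d a).coeff j ≠ 0 ∨ (MvPolynomial.coeff d b).coeff j ≠ 0) with h' | h'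
    · exact ha d j h'
    · exact hb d j h'
  zero_mem' := by intro d j h; simp at h
  smul_mem' := by
    intro c a ha d j h
    rw [MvPolynomial.coeff_smul, smul_eq_mul, Polynomial.coeff_mul] at h
    obtain ⟨x, hx, hne⟩ := Finset.exists_ne_zero_of_sum_ne_zero h
    have h2 : (MvPolynomial.coeff d a).coeff x.2 ≠ 0 := fun h0 => hne (by simp [h0])
    have := ha d x.2 h2
    have hj : x.2 ≤ j := by
      have := (Finset.HasAntidiagonal.mem_antidiagonal.mp hx); omega
    omega

lemma fed_antitone {m s s' : ℕ} (h : s ≤ s') : fedSub m s' ≤ fedSub m s :=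
  fun _ ha d j hc => le_trans h (ha d j hc)

lemma fed_mul {m s t : ℕ} {a b : PhaseAlg m} (ha : a ∈ fedSub m s) (hb : b ∈ fedSub m t) :
    a * b ∈ fedSub m (s + t) := by
  intro d j h
  rw [MvPolynomial.coeff_mul] at h
  rw [Polynomial.finset_sum_coeff] at h
  obtain ⟨x, hx, hne⟩ := Finset.exists_ne_zero_of_sum_ne_zero h
  rw [Polynomial.coeff_mul] at hne
  obtain ⟨y, hy, hne2⟩ := Finset.exists_ne_zero_of_sum_ne_zero hne
  have h1 : (MvPolynomial.coeff x.1 a).coeff y.1 ≠ 0 := fun h0 => hne2 (by simp [h0])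
  have h2 : (MvPolynomial.coeff x.2 b).coeff y.2 ≠ 0 := fun h0 => hne2 (by simp [h0])
  have e1 := ha x.1 y.1 h1
  have e2 := hb x.2 y.2 h2
  have hd : x.1 + x.2 = d := Finset.HasAntidiagonal.mem_antidiagonal.mp hx
  have hj : y.1 + y.2 = j := Finset.HasAntidiagonal.mem_antidiagonal.mp hy
  have hsum : d.sum (fun _ e => e) = x.1.sum (fun _ e => e) + x.2.sum (fun _ e => e) := by
    rw [← hd, Finsupp.sum_add_index'] <;> simp
  omega

lemma fed_pderiv {m s : ℕ} (v : Fin m ⊕ Fin m) {a : PhaseAlg m} (ha : a ∈ fedSub m s) :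
    MvPolynomial.pderiv v a ∈ fedSub m (s - 1) := by
  intro d j h
  rw [coeff_pderiv] at h
  have h1 : (MvPolynomial.coeff (d + Finsupp.single v 1) a).coeff j ≠ 0 := by
    intro h0
    apply h
    rw [← Polynomial.C_eq_natCast, Polynomial.coeff_C_mul, h0, mul_zero]
  have := ha _ j h1
  have hsum : (d + Finsupp.single v 1).sum (fun _ e => e) = d.sum (fun _ e => e) + 1 := by
    rw [Finsupp.sum_add_index'] <;> simp
  omega

lemma fed_CX {m n k : ℕ} {a : PhaseAlg m} (ha : a ∈ fedSub m n) :
    MvPolynomial.C (Polynomial.X ^ k) * a ∈ fedSub m (n + 2 * k) := by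
  intro d j h
  rw [MvPolynomial.coeff_C_mul, Polynomial.coeff_mul] at h
  obtain ⟨x, hx, hne⟩ := Finset.exists_ne_zero_of_sum_ne_zero h
  have hX : (Polynomial.X ^ k : Polynomial ℂ).coeff x.1 ≠ 0 := fun h0 => hne (by simp [h0])
  rw [Polynomial.coeff_X_pow] at hX
  have hx1 : x.1 = k := by by_contra hc; simp [hc] at hX
  have h2 : (MvPolynomial.coeff d a).coeff x.2 ≠ 0 := fun h0 => hne (by simp [h0])
  have := ha d x.2 h2
  have hj := Finset.HasAntidiagonal.mem_antidiagonal.mp hx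
  omega

lemma fed_zsmul {m n : ℕ} (z : ℂ) {a : PhaseAlg m} (ha : a ∈ fedSub m n) :
    z • a ∈ fedSub m n := by
  intro d j h
  rw [MvPolynomial.coeff_smul, Polynomial.coeff_smul, smul_eq_mul] at h
  exact ha d j (fun h0 => h (by simp [h0]))

/-- Tensor version of the filtration. -/
def tenSub (m n : ℕ) : Submodule (Polynomial ℂ) (PhaseAlg m ⊗[Polynomial ℂ] PhaseAlg m) :=
  Submodule.span (Polynomial ℂ)
    {x | ∃ s t : ℕ, ∃ a ∈ fedSub m s, ∃ b ∈ fedSub m t, n ≤ s + t ∧ x = a ⊗ₜ[Polynomial ℂ] b}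

lemma tmul_mem_tenSub {m n s t : ℕ} {a b : PhaseAlg m} (ha : a ∈ fedSub m s)
    (hb : b ∈ fedSub m t) (hn : n ≤ s + t) : a ⊗ₜ[Polynomial ℂ] b ∈ tenSub m n :=
  Submodule.subset_span ⟨s, t, a, ha, b, hb, hn, rfl⟩

lemma pihat_tenSub {m n : ℕ} {x : PhaseAlg m ⊗[Polynomial ℂ] PhaseAlg m}
    (hx : x ∈ tenSub m n) : PiHat m x ∈ tenSub m (n - 2) := by
  have : tenSub m n ≤ (tenSub m (n - 2)).comap (PiHat m) := by
    rw [tenSub, Submodule.span_le]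
    rintro _ ⟨s, t, a, ha, b, hb, hn, rfl⟩
    simp only [SetLike.mem_coe, Submodule.mem_comap]
    rw [PiHat, LinearMap.sum_apply]
    apply Submodule.sum_mem
    intro i _
    rw [show ∀ (f g : PhaseAlg m ⊗[Polynomial ℂ] PhaseAlg m →ₗ[Polynomial ℂ]
        PhaseAlg m ⊗[Polynomial ℂ] PhaseAlg m) (y : PhaseAlg m ⊗[Polynomial ℂ] PhaseAlg m),
        (f - g) y = f y - g y from fun f g y => rfl,
      TensorProduct.map_tmul, TensorProduct.map_tmul]
    letI := @TensorProduct.addCommGroup (Polynomial ℂ) _ (PhaseAlg m) (PhaseAlg m) _ _ _ _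
    apply sub_mem
    · exact tmul_mem_tenSub (fed_pderiv _ ha) (fed_pderiv _ hb) (by omega)
    · exact tmul_mem_tenSub (fed_pderiv _ ha) (fed_pderiv _ hb) (by omega)
  exact this hx

lemma pihat_pow_tenSub {m n : ℕ} (k : ℕ) {x : PhaseAlg m ⊗[Polynomial ℂ] PhaseAlg m}
    (hx : x ∈ tenSub m n) : (PiHat m ^ k) x ∈ tenSub m (n - 2 * k) := by
  induction k generalizing n x with
  | zero => simpa using hx
  | succ k ih =>
    have h1 : (PiHat m ^ (k + 1)) x = (PiHat m ^ k) (PiHat m x) := by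
      rw [pow_succ, Module.End.mul_apply]
    rw [h1]
    have := ih (pihat_tenSub hx)
    have he : n - 2 - 2 * k = n - 2 * (k + 1) := by omega
    rwa [he] at this

lemma mul'_tenSub {m n : ℕ} {x : PhaseAlg m ⊗[Polynomial ℂ] PhaseAlg m}
    (hx : x ∈ tenSub m n) : LinearMap.mul' (Polynomial ℂ) (PhaseAlg m) x ∈ fedSub m n := by
  have : tenSub m n ≤ (fedSub m n).comap (LinearMap.mul' (Polynomial ℂ) (PhaseAlg m)) := by
    rw [tenSub, Submodule.span_le]
    rintro _ ⟨s, t, a, ha, b, hb, hn, rfl⟩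
    simp only [SetLike.mem_coe, Submodule.mem_comap, LinearMap.mul'_apply]
    exact fed_antitone hn (fed_mul ha hb)
  exact this hx

/-- The Moyal--Weyl product respects the Fedosov filtration:
`F^s ∘ F^t ⊆ F^{s+t}`; equivalently `deg_F (a ∘ b) ≥ deg_F a + deg_F b`. -/
theorem moyal_fedosov_filtration (m : ℕ) (s t : ℕ) (a b : PhaseAlg m)
    (ha : FedosovGE s a) (hb : FedosovGE t b) :
    FedosovGE (s + t) (moyal a b) := by
  have hmem : moyal a b ∈ fedSub m (s + t) := by
    rw [moyal]
    apply Submodule.sum_mem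
    intro k _
    apply fed_zsmul
    have h1 : a ⊗ₜ[Polynomial ℂ] b ∈ tenSub m (s + t) := tmul_mem_tenSub ha hb le_rfl
    have h2 := pihat_pow_tenSub k h1
    have h3 := mul'_tenSub h2
    have h4 := fed_CX (k := k) h3
    exact fed_antitone (by omega) h4
  exact hmem
end
end
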